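/- Let F be the free group on x_1, …, x_{2g}, m and suppose given u_i^♯, u_i^♭ ∈ ⟨x_1,…,x_{2g}⟩ (1 ≤ i ≤ 2g) with [u_1^♭,u_2^♭]⋯[u_{2g−1}^♭,u_{2g}^♭] = [u_1^♯,u_2^♯]⋯[u_{2g−1}^♯,u_{2g}^♯]. Set r_i = m u_i^♯ m⁻¹ (u_i^♭)⁻¹, w_i = Π_{j=1}^i [u_{2j−1}^♭, u_{2j}^♭], and W_i = w_{i−1} r_{2i−1} w_{i−1}⁻¹ · (w_{i−1} u_{2i−1}^♭) r_{2i} (w_{i−1} u_{2i−1}^♭)⁻¹ · (w_i u_{2i}^♭) r_{2i−1}⁻¹ (w_i u_{2i}^♭)⁻¹ · w_i r_{2i}⁻¹ w_i⁻¹. Then Π_{i=1}^g W_i = m·([u_1^♯,u_2^♯]⋯[u_{2g−1}^♯,u_{2g}^♯])·m⁻¹·w_g⁻¹ in F. -/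

import Mathlib

open scoped commutatorElement

lemma key_step {G : Type*} [Group G] (a b c S T m' : G) :
    a * (m' * S * m'⁻¹ * b⁻¹) * a⁻¹
      * ((a * b) * (m' * T * m'⁻¹ * c⁻¹) * (a * b)⁻¹)
      * ((a * ⁅b, c⁆ * c) * (m' * S * m'⁻¹ * b⁻¹)⁻¹ * (a * ⁅b, c⁆ * c)⁻¹)
      * (a * ⁅b, c⁆ * (m' * T * m'⁻¹ * c⁻¹)⁻¹ * (a * ⁅b, c⁆)⁻¹)
    = a * (m' * ⁅S, T⁆ * m'⁻¹) * (a * ⁅b, c⁆)⁻¹ := by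
  simp only [commutatorElement_def]
  group

theorem surgery_identity_key (g : ℕ)
    (m : FreeGroup (Fin (2*g) ⊕ Unit)) (hm : m = FreeGroup.of (Sum.inr ()))
    (us ub : ℕ → FreeGroup (Fin (2*g) ⊕ Unit))
    (hus : ∀ i, i < 2*g →
      us i ∈ Subgroup.closure (Set.range fun j : Fin (2*g) => FreeGroup.of (Sum.inl j)))
    (hub : ∀ i, i < 2*g →
      ub i ∈ Subgroup.closure (Set.range fun j : Fin (2*g) => FreeGroup.of (Sum.inl j)))
    (hcomm : ((List.range g).map fun j => ⁅ub (2*j), ub (2*j+1)⁆).prod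
      = ((List.range g).map fun j => ⁅us (2*j), us (2*j+1)⁆).prod)
    (r : ℕ → FreeGroup (Fin (2*g) ⊕ Unit))
    (hr : ∀ i, r i = m * us i * m⁻¹ * (ub i)⁻¹)
    (w : ℕ → FreeGroup (Fin (2*g) ⊕ Unit))
    (hw : ∀ i, w i = ((List.range i).map fun j => ⁅ub (2*j), ub (2*j+1)⁆).prod)
    (W : ℕ → FreeGroup (Fin (2*g) ⊕ Unit))
    (hW : ∀ i, W i =
      w (i-1) * r (2*(i-1)) * (w (i-1))⁻¹
      * ((w (i-1) * ub (2*(i-1))) * r (2*(i-1)+1) * (w (i-1) * ub (2*(i-1)))⁻¹)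
      * ((w i * ub (2*(i-1)+1)) * (r (2*(i-1)))⁻¹ * (w i * ub (2*(i-1)+1))⁻¹)
      * (w i * (r (2*(i-1)+1))⁻¹ * (w i)⁻¹)) :
    ((List.range g).map fun i => W (i+1)).prod
      = m * (((List.range g).map fun j => ⁅us (2*j), us (2*j+1)⁆).prod) * m⁻¹
        * (w g)⁻¹ := by
  have hw0 : w 0 = 1 := by simp [hw]
  have hwsucc : ∀ k, w (k+1) = w k * ⁅ub (2*k), ub (2*k+1)⁆ := by
    intro k
    rw [hw, hw, List.range_succ, List.map_append, List.prod_append]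
    simp
  have hWkey : ∀ k, W (k+1)
      = w k * (m * ⁅us (2*k), us (2*k+1)⁆ * m⁻¹) * (w (k+1))⁻¹ := by
    intro k
    rw [hW (k+1)]
    simp only [Nat.add_sub_cancel]
    rw [hr, hr, hwsucc k]
    have := key_step (w k) (ub (2*k)) (ub (2*k+1)) (us (2*k)) (us (2*k+1)) m
    calc _ = w k * (m * us (2*k) * m⁻¹ * (ub (2*k))⁻¹) * (w k)⁻¹
      * ((w k * ub (2*k)) * (m * us (2*k+1) * m⁻¹ * (ub (2*k+1))⁻¹) * (w k * ub (2*k))⁻¹)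
      * ((w k * ⁅ub (2*k), ub (2*k+1)⁆ * ub (2*k+1)) * (m * us (2*k) * m⁻¹ * (ub (2*k))⁻¹)⁻¹
          * (w k * ⁅ub (2*k), ub (2*k+1)⁆ * ub (2*k+1))⁻¹)
      * (w k * ⁅ub (2*k), ub (2*k+1)⁆ * (m * us (2*k+1) * m⁻¹ * (ub (2*k+1))⁻¹)⁻¹
          * (w k * ⁅ub (2*k), ub (2*k+1)⁆)⁻¹) := by group
      _ = _ := by rw [this]
  suffices h : ∀ k, ((List.range k).map fun i => W (i+1)).prod
      = m * (((List.range k).map fun j => ⁅us (2*j), us (2*j+1)⁆).prod) * m⁻¹ * (w k)⁻¹ by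
    exact h g
  intro k
  induction k with
  | zero => simp [hw0]
  | succ k ih =>
    rw [List.range_succ]
    simp only [List.map_append, List.prod_append, List.map_cons, List.map_nil,
      List.prod_cons, List.prod_nil, mul_one]
    rw [ih, hWkey k]
    group
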